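/- More generally, for any i < j in a strictly increasing sequence of keys, if S contains all adjacent distinction bit positions, then D-offset[D-bit(Compress(key_i), Compress(key_j))] = D-bit(key_i, key_j). -/

import Mathlib

/-- Lexicographic order on fixed-length bit strings (position 0 most significant). -/
def keyLt {m : ℕ} (x y : Fin m → Bool) : Prop :=
  ∃ i : Fin m, (∀ j : Fin m, j < i → x j = y j) ∧ x i < y i

/-- Distinction bit position: the least position where `x` and `y` differ. -/
noncomputable def dbit {m : ℕ} (x y : Fin m → Bool) : ℕ :=
  sInf {i : ℕ | ∃ h : i < m, x ⟨i, h⟩ ≠ y ⟨i, h⟩}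

/-- The first differing position of two lists. -/
noncomputable def firstDiff {α : Type*} (a b : List α) : ℕ :=
  sInf {i : ℕ | a[i]? ≠ b[i]?}

/-- The bits of `k` at the positions of `S`, in increasing order of position. -/
noncomputable def compress {m : ℕ} (S : Finset ℕ) (k : Fin m → Bool) : List Bool :=
  (S.sort (· ≤ ·)).map (fun i => if h : i < m then k ⟨i, h⟩ else false)

lemma dbit_eq {m : ℕ} {x y : Fin m → Bool} {p : ℕ} (hp : p < m)
    (hne : x ⟨p, hp⟩ ≠ y ⟨p, hp⟩)
    (hag : ∀ q (hq : q < m), q < p → x ⟨q, hq⟩ = y ⟨q, hq⟩) : dbit x y = p := by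
  have hpmem : p ∈ {i : ℕ | ∃ h : i < m, x ⟨i, h⟩ ≠ y ⟨i, h⟩} := ⟨hp, hne⟩
  refine le_antisymm (Nat.sInf_le hpmem) (le_csInf ⟨p, hpmem⟩ ?_)
  intro q hq
  by_contra hlt
  push_neg at hlt
  obtain ⟨hqm, hne'⟩ := hq
  exact hne' (hag q hqm hlt)

lemma dbit_spec {m : ℕ} {x y : Fin m → Bool} (h : keyLt x y) :
    ∃ hm : dbit x y < m, x ⟨dbit x y, hm⟩ = false ∧ y ⟨dbit x y, hm⟩ = true ∧
      ∀ q (hq : q < m), q < dbit x y → x ⟨q, hq⟩ = y ⟨q, hq⟩ := by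
  obtain ⟨i, hagree, hlt⟩ := h
  have hxy : x i = false ∧ y i = true := by
    revert hlt; cases hx : x i <;> cases hy : y i <;> simp
  have hag : ∀ q (hq : q < m), q < (i : ℕ) → x ⟨q, hq⟩ = y ⟨q, hq⟩ := by
    intro q hq hlt'
    exact hagree ⟨q, hq⟩ hlt'
  have hd : dbit x y = i :=
    dbit_eq i.isLt (by simp [hxy.1, hxy.2]) hag
  rw [hd]
  exact ⟨i.isLt, by simpa using hxy.1, by simpa using hxy.2, hag⟩

lemma keyLt_trans_dbit {m : ℕ} {x y z : Fin m → Bool} (hxy : keyLt x y) (hyz : keyLt y z) :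
    keyLt x z ∧ dbit x z = min (dbit x y) (dbit y z) := by
  obtain ⟨hpm, hxp, hyp, hagp⟩ := dbit_spec hxy
  obtain ⟨hqm, hyq, hzq, hagq⟩ := dbit_spec hyz
  set p := dbit x y with hpd
  set q := dbit y z with hqd
  rcases lt_trichotomy p q with hlt | heq | hgt
  · have hzp : z ⟨p, hpm⟩ = true := by rw [← hagq p hpm hlt]; exact hyp
    have hag : ∀ r (hr : r < m), r < p → x ⟨r, hr⟩ = z ⟨r, hr⟩ := by
      intro r hr hrp
      rw [hagp r hr hrp, hagq r hr (hrp.trans hlt)]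
    have hk : keyLt x z := ⟨⟨p, hpm⟩, fun j hj => hag j j.isLt hj, by
      rw [hxp, hzp]; exact Bool.false_lt_true⟩
    refine ⟨hk, ?_⟩
    rw [dbit_eq hpm (by rw [hxp, hzp]; simp) hag, min_eq_left hlt.le]
  · exfalso
    have hfin : (⟨p, hpm⟩ : Fin m) = ⟨q, hqm⟩ := Fin.ext heq
    rw [hfin, hyq] at hyp
    exact Bool.false_ne_true hyp
  · have hxq : x ⟨q, hqm⟩ = false := by rw [hagp q hqm hgt]; exact hyq
    have hag : ∀ r (hr : r < m), r < q → x ⟨r, hr⟩ = z ⟨r, hr⟩ := by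
      intro r hr hrq
      rw [hagp r hr (hrq.trans hgt), hagq r hr hrq]
    have hk : keyLt x z := ⟨⟨q, hqm⟩, fun j hj => hag j j.isLt hj, by
      rw [hxq, hzq]; exact Bool.false_lt_true⟩
    refine ⟨hk, ?_⟩
    rw [dbit_eq hqm (by rw [hxq, hzq]; simp) hag, min_eq_right hgt.le]

lemma keyLt_dbit_mem {m n : ℕ} (key : ℕ → Fin m → Bool)
    (hinc : ∀ k < n, keyLt (key k) (key (k + 1)))
    (S : Finset ℕ)
    (hS : ∀ k : ℕ, 1 ≤ k → k ≤ n → dbit (key (k - 1)) (key k) ∈ S) :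
    ∀ i j : ℕ, i < j → j ≤ n → keyLt (key i) (key j) ∧ dbit (key i) (key j) ∈ S := by
  intro i j hij
  induction j, hij using Nat.le_induction with
  | base =>
    intro hjn
    have h1 : keyLt (key i) (key (i + 1)) := hinc i (by omega)
    have h2 := hS (i + 1) (by omega) hjn
    simpa using ⟨h1, h2⟩
  | succ j hij ih =>
    intro hjn
    obtain ⟨h1, hm1⟩ := ih (by omega)
    have h2 : keyLt (key j) (key (j + 1)) := hinc j (by omega)
    have hm2 := hS (j + 1) (by omega) hjn
    simp only [Nat.add_sub_cancel] at hm2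
    obtain ⟨hk, hd⟩ := keyLt_trans_dbit h1 h2
    refine ⟨hk, ?_⟩
    rw [hd]
    rcases min_cases (dbit (key i) (key j)) (dbit (key j) (key (j + 1))) with ⟨h, _⟩ | ⟨h, _⟩ <;>
      rw [h] <;> assumption

/-- For any i < j, if S contains all adjacent distinction bit positions, the
D-offset array maps the first differing position of the compressed keys back to
the original distinction bit position of key_i and key_j. -/
theorem doffset_recovers_dbit_pairs {m n : ℕ} (key : ℕ → Fin m → Bool)
    (hinc : ∀ k < n, keyLt (key k) (key (k + 1)))
    (S : Finset ℕ)
    (hS : ∀ k : ℕ, 1 ≤ k → k ≤ n → dbit (key (k - 1)) (key k) ∈ S) :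
    ∀ i j : ℕ, i < j → j ≤ n →
      (S.sort (· ≤ ·))[firstDiff (compress S (key i)) (compress S (key j))]?
        = some (dbit (key i) (key j)) := by
  intro i j hij hjn
  obtain ⟨hk, hpS⟩ := keyLt_dbit_mem key hinc S hS i j hij hjn
  obtain ⟨hpm, hxp, hyp, hag⟩ := dbit_spec hk
  set p := dbit (key i) (key j) with hp
  set l := S.sort (· ≤ ·) with hl
  have hmem : p ∈ l := (Finset.mem_sort _).mpr hpS
  obtain ⟨t, ht, hgt⟩ := List.mem_iff_getElem.mp hmem
  have hsorted : l.Pairwise (· < ·) := (Finset.sortedLT_sort S).pairwise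
  have hA : ∀ (k : Fin m → Bool) (s : ℕ) (hs : s < l.length),
      (compress S k)[s]? = some (if h : l[s] < m then k ⟨l[s], h⟩ else false) := by
    intro k s hs
    simp [compress, ← hl, List.getElem?_eq_getElem hs]
  have tmem : t ∈ {r : ℕ | (compress S (key i))[r]? ≠ (compress S (key j))[r]?} := by
    simp only [Set.mem_setOf_eq, hA (key i) t ht, hA (key j) t ht]
    simp only [hgt, dif_pos hpm, hxp, hyp]
    simp
    intro h
    have h1 : key i ⟨p, hpm⟩ = false := hxp
    have h2 : key j ⟨p, hpm⟩ = true := hyp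
    rw [h1, h2] at h
    exact Bool.false_ne_true h
  have hfd : firstDiff (compress S (key i)) (compress S (key j)) = t := by
    refine le_antisymm (Nat.sInf_le tmem) (le_csInf ⟨t, tmem⟩ ?_)
    intro b hb
    by_contra hbt
    push_neg at hbt
    have hbl : b < l.length := hbt.trans ht
    have hlb : l[b] < p := by
      have := List.pairwise_iff_getElem.mp hsorted b t hbl ht hbt
      rwa [hgt] at this
    have hblm : l[b] < m := hlb.trans hpm
    apply hb
    rw [hA (key i) b hbl, hA (key j) b hbl, dif_pos hblm, dif_pos hblm,
      hag l[b] hblm hlb]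
  rw [hfd, List.getElem?_eq_getElem ht, hgt]
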